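/- Let 1 < p < 2 and φ_p(s) = ∑_{n=1}^∞ (s n^{-1/p} - 1)^+ for s ≥ 0. Then lim_{s → ∞} φ_p(s)/s^p = 1/(p-1). -/

import Mathlib

open Filter Real Set MeasureTheory

/-- For `1 < p < 2` and `φ_p(s) = ∑_{n≥1} (s n^{-1/p} - 1)^+`,
`φ_p(s)/s^p → 1/(p-1)` as `s → ∞`. -/
theorem stmt_9 (p : ℝ) (hp : 1 < p) (hp2 : p < 2)
    (φ : ℝ → ℝ)
    (hφ : ∀ s : ℝ, φ s = ∑' n : ℕ, max (s * ((n : ℝ) + 1) ^ (-(1 / p)) - 1) 0) :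
    Tendsto (fun s : ℝ => φ s / s ^ p) atTop (nhds (1 / (p - 1))) := by
  have hp0 : (0:ℝ) < p := by linarith
  have hp1 : (0:ℝ) < p - 1 := by linarith
  set r : ℝ := -(1 / p) with hr
  have hr0 : r < 0 := by
    rw [hr]; simp only [neg_neg, Left.neg_neg_iff]; positivity
  have hr1 : -1 < r := by
    rw [hr, neg_lt_neg_iff]
    rw [div_lt_one hp0]; exact hp
  have hpr : p * r = -1 := by
    rw [hr]; field_simp
  have hr1' : r + 1 = (p - 1) / p := by
    rw [hr]; field_simp; ring
  have hr1pos : 0 < r + 1 := by rw [hr1']; positivity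
  -- the exact integral value
  set J : ℝ → ℝ := fun s => s * ((s ^ (p-1) - 1) / (r + 1)) - (s ^ p - 1) with hJ
  -- key bounds
  have key : ∀ s : ℝ, 1 ≤ s → J s ≤ φ s ∧ φ s ≤ J s + s := by
    intro s hs
    have hs0 : (0:ℝ) < s := by linarith
    have hsp1 : (1:ℝ) ≤ s ^ p := one_le_rpow hs hp0.le
    have hsp0 : (0:ℝ) < s ^ p := by linarith
    set F : ℝ → ℝ := fun x => max (s * x ^ r - 1) 0 with hF
    -- F x = 0 for x ≥ s^p
    have hzero : ∀ x : ℝ, s ^ p ≤ x → F x = 0 := by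
      intro x hx
      have hx0 : (0:ℝ) < x := lt_of_lt_of_le hsp0 hx
      have h1 : x ^ r ≤ (s ^ p) ^ r := rpow_le_rpow_of_nonpos hsp0 hx hr0.le
      have h2 : (s ^ p) ^ r = s⁻¹ := by
        rw [← Real.rpow_mul hs0.le, hpr, Real.rpow_neg_one]
      have h3 : s * x ^ r ≤ 1 := by
        calc s * x ^ r ≤ s * s⁻¹ := by
              apply mul_le_mul_of_nonneg_left _ hs0.le
              rw [← h2]; exact h1
          _ = 1 := mul_inv_cancel₀ hs0.ne'
      simp only [hF]
      exact max_eq_right (by linarith)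
    -- F x = s x^r - 1 for 1 ≤ x ≤ s^p
    have hpos : ∀ x : ℝ, 0 < x → x ≤ s ^ p → F x = s * x ^ r - 1 := by
      intro x hx0 hx
      have h1 : (s ^ p) ^ r ≤ x ^ r := rpow_le_rpow_of_nonpos hx0 hx hr0.le
      have h2 : (s ^ p) ^ r = s⁻¹ := by
        rw [← Real.rpow_mul hs0.le, hpr, Real.rpow_neg_one]
      have h3 : 1 ≤ s * x ^ r := by
        calc (1:ℝ) = s * s⁻¹ := (mul_inv_cancel₀ hs0.ne').symm
          _ ≤ s * x ^ r := by
              apply mul_le_mul_of_nonneg_left _ hs0.le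
              rw [← h2]; exact h1
      simp only [hF]
      exact max_eq_left (by linarith)
    -- continuity / integrability
    have hFc : ContinuousOn F (Ici (1:ℝ)) := by
      apply ContinuousOn.sup _ continuousOn_const
      apply ContinuousOn.sub _ continuousOn_const
      apply ContinuousOn.mul continuousOn_const
      apply ContinuousOn.rpow_const continuousOn_id
      intro x hx
      left
      simp only [id_eq]
      have : (1:ℝ) ≤ x := hx
      exact ne_of_gt (by linarith)
    have hFint : ∀ a b : ℝ, 1 ≤ a → 1 ≤ b → IntervalIntegrable F volume a b := by
      intro a b ha hb
      apply (hFc.mono _).intervalIntegrable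
      intro x hx
      rcases le_total a b with h | h
      · rw [uIcc_of_le h] at hx; exact le_trans ha hx.1
      · rw [uIcc_of_ge h] at hx; exact le_trans hb hx.1
    -- exact integral value
    have hIval : ∀ b : ℝ, s ^ p ≤ b → ∫ x in (1:ℝ)..b, F x = J s := by
      intro b hb
      have hb1 : (1:ℝ) ≤ b := le_trans hsp1 hb
      rw [← _root_.intervalIntegral.integral_add_adjacent_intervals
          (a := (1:ℝ)) (b := s ^ p) (c := b) (hFint 1 (s ^ p) le_rfl hsp1)
          (hFint (s ^ p) b hsp1 hb1)]
      have h2 : ∫ x in (s ^ p)..b, F x = 0 := by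
        rw [_root_.intervalIntegral.integral_congr (g := fun _ => (0:ℝ)), _root_.intervalIntegral.integral_zero]
        intro x hx
        rw [uIcc_of_le hb] at hx
        exact hzero x hx.1
      have h1 : ∫ x in (1:ℝ)..(s ^ p), F x = J s := by
        rw [_root_.intervalIntegral.integral_congr (g := fun x => s * x ^ r - 1)]
        · rw [_root_.intervalIntegral.integral_sub _ intervalIntegrable_const,
            _root_.intervalIntegral.integral_const_mul, integral_rpow (Or.inl hr1),
            integral_one]
          · rw [hJ]
            have : (s ^ p) ^ (r + 1) = s ^ (p - 1) := by
              rw [← Real.rpow_mul hs0.le]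
              congr 1
              rw [mul_add, hpr, mul_one]; ring
            rw [this, Real.one_rpow]
          · apply IntervalIntegrable.const_mul
            apply (intervalIntegral.intervalIntegrable_rpow (Or.inr _))
            rw [uIcc_of_le hsp1]
            intro h
            have := h.1
            norm_num at this
        · intro x hx
          rw [uIcc_of_le hsp1] at hx
          exact hpos x (by linarith [hx.1]) hx.2
      rw [h1, h2, add_zero]
    -- the sum is finite
    set N : ℕ := ⌈s ^ p⌉₊ with hN
    have hN1 : 1 ≤ N := Nat.one_le_ceil_iff.mpr hsp0
    have hNs : s ^ p ≤ (N : ℝ) := Nat.le_ceil _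
    have hsum : φ s = ∑ i ∈ Finset.range N, F ((i:ℝ) + 1) := by
      rw [hφ]
      apply tsum_eq_sum
      intro n hn
      have hn' : N ≤ n := by simpa using hn
      have : (N : ℝ) ≤ n := by exact_mod_cast hn'
      exact hzero ((n:ℝ)+1) (by linarith)
    constructor
    · -- lower bound
      have hanti : AntitoneOn F (Icc (1:ℝ) (1 + (N:ℕ))) := by
        intro x hx y hy hxy
        apply max_le_max _ le_rfl
        have : y ^ r ≤ x ^ r := rpow_le_rpow_of_nonpos (by linarith [hx.1]) hxy hr0.le
        nlinarith
      have := hanti.integral_le_sum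
      rw [hIval (1 + (N:ℝ)) (by linarith)] at this
      rw [hsum]
      refine le_trans this (le_of_eq ?_)
      apply Finset.sum_congr rfl
      intro i _
      rw [add_comm]
    · -- upper bound
      obtain ⟨M, hM⟩ : ∃ M, N = M + 1 := ⟨N - 1, (Nat.succ_pred_eq_of_pos hN1).symm⟩
      have hanti : AntitoneOn F (Icc (1:ℝ) (1 + (M:ℕ))) := by
        intro x hx y hy hxy
        apply max_le_max _ le_rfl
        have : y ^ r ≤ x ^ r := rpow_le_rpow_of_nonpos (by linarith [hx.1]) hxy hr0.le
        nlinarith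
      have hle := hanti.sum_le_integral
      have hIM : ∫ x in (1:ℝ)..(1 + (M:ℕ)), F x = J s := by
        apply hIval
        have : (N : ℝ) = (M : ℝ) + 1 := by exact_mod_cast hM
        push_cast
        linarith
      rw [hIM] at hle
      have hF1 : F 1 ≤ s := by
        simp only [hF, Real.one_rpow, mul_one]
        apply max_le (by linarith) hs0.le
      rw [hsum, hM, Finset.sum_range_succ']
      have hrw : ∀ i : ℕ, F (((i+1:ℕ):ℝ) + 1) = F (1 + ((i + 1 : ℕ):ℝ)) := by
        intro i; rw [add_comm]
      calc (∑ i ∈ Finset.range M, F (((i+1:ℕ):ℝ) + 1)) + F ((0:ℕ) + 1)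
          = (∑ i ∈ Finset.range M, F (1 + ((i + 1 : ℕ):ℝ))) + F 1 := by
            simp only [hrw]; norm_num
        _ ≤ J s + s := add_le_add hle hF1
  -- limits of the bounding functions
  have hL : (1:ℝ) / (r + 1) - 1 = 1 / (p - 1) := by
    rw [hr1']
    field_simp
    ring
  have hglim : Tendsto (fun s : ℝ => 1 / (r+1) - 1 - s ^ (-(p-1)) / (r+1) + s ^ (-p))
      atTop (nhds (1 / (p-1))) := by
    have h1 : Tendsto (fun s : ℝ => s ^ (-(p-1))) atTop (nhds 0) := tendsto_rpow_neg_atTop hp1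
    have h2 : Tendsto (fun s : ℝ => s ^ (-p)) atTop (nhds 0) := tendsto_rpow_neg_atTop hp0
    have h3 := ((tendsto_const_nhds (x := 1 / (r+1) - 1) (f := atTop)).sub
      (h1.div_const (r+1))).add h2
    have e : (1 / (r+1) - 1 - (0:ℝ)/(r+1)) + 0 = 1 / (p-1) := by rw [← hL]; ring
    rw [e] at h3
    exact h3
  have hhlim : Tendsto (fun s : ℝ => (1 / (r+1) - 1 - s ^ (-(p-1)) / (r+1) + s ^ (-p))
      + s ^ (-(p-1))) atTop (nhds (1 / (p-1))) := by
    have h1 : Tendsto (fun s : ℝ => s ^ (-(p-1))) atTop (nhds 0) := tendsto_rpow_neg_atTop hp1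
    simpa using hglim.add h1
  -- eventual equalities of the bounds with J s / s^p etc.
  have hbound : ∀ᶠ s : ℝ in atTop,
      (1 / (r+1) - 1 - s ^ (-(p-1)) / (r+1) + s ^ (-p)) ≤ φ s / s ^ p ∧
      φ s / s ^ p ≤ (1 / (r+1) - 1 - s ^ (-(p-1)) / (r+1) + s ^ (-p)) + s ^ (-(p-1)) := by
    filter_upwards [eventually_ge_atTop (1:ℝ)] with s hs
    have hs0 : (0:ℝ) < s := by linarith
    have hsp0 : (0:ℝ) < s ^ p := rpow_pos_of_pos hs0 p
    obtain ⟨h1, h2⟩ := key s hs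
    -- J s / s^p equals the lower bound expression
    have e1 : s * s ^ (p - 1) = s ^ p := by
      have h := Real.rpow_add hs0 1 (p - 1)
      rw [Real.rpow_one] at h
      rw [← h]
      congr 1
      ring
    have e2 : s ^ (-(p-1)) * s ^ p = s := by
      rw [← Real.rpow_add hs0]
      norm_num
    have e3 : s ^ (-p) * s ^ p = 1 := by
      rw [← Real.rpow_add hs0]
      norm_num
    have e4 : s / s ^ p = s ^ (-(p-1)) := by
      rw [eq_comm, eq_div_iff hsp0.ne']
      exact e2
    have hJs : J s = (s ^ p - s) / (r+1) - (s ^ p - 1) := by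
      simp only [hJ]
      rw [← e1]
      ring
    have hJeq : J s / s ^ p = 1 / (r+1) - 1 - s ^ (-(p-1)) / (r+1) + s ^ (-p) := by
      rw [div_eq_iff hsp0.ne', hJs]
      have expand : (1 / (r+1) - 1 - s ^ (-(p-1)) / (r+1) + s ^ (-p)) * s ^ p
          = (1 / (r+1) - 1) * s ^ p - (s ^ (-(p-1)) * s ^ p) / (r+1) + s ^ (-p) * s ^ p := by
        ring
      rw [expand, e2, e3]
      ring
    constructor
    · rw [← hJeq]
      gcongr
    · have hd : φ s / s ^ p ≤ (J s + s) / s ^ p := by gcongr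
      refine hd.trans (le_of_eq ?_)
      rw [add_div, hJeq, e4]
  refine tendsto_of_tendsto_of_tendsto_of_le_of_le' hglim hhlim ?_ ?_
  · filter_upwards [hbound] with s h using h.1
  · filter_upwards [hbound] with s h using h.2
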